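/- Let P ≥ 3 be an odd integer. There exist a width M and parameters λ_m ∈ ℝ, frequencies ω_m ∈ {1,…,(P−1)/2}, and phases φ_m^{(a)}, φ_m^{(b)}, φ_m^{(c)} ∈ ℝ with φ_m^{(a)} + φ_m^{(b)} = φ_m^{(c)} for m = 1,…,M, such that the two-layer quadratic network f(a,b)_k = Σ_{m=1}^{M} w_{m,k} (u_{m,a} + v_{m,b})², with u_{m,i} = λ_m cos((2π/P)ω_m i + φ_m^{(a)}), v_{m,j} = λ_m cos((2π/P)ω_m j + φ_m^{(b)}), w_{m,k} = λ_m cos((2π/P)ω_m k + φ_m^{(c)}), classifies every input correctly: for all a, b ∈ {0,…,P−1}, the unique maximizer over k ∈ {0,…,P−1} of f(a,b)_k is k = (a+b) mod P. That is, the analytical cosine-form solution achieves 100% accuracy on the full modular addition dataset. -/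

import Mathlib

open Real Finset

lemma key_trig (A B C : ℝ) :
    Real.cos C * (Real.cos A + Real.cos B) ^ 2
      + Real.cos (C + 4 * π / 3) * (Real.cos (A + 2 * π / 3) + Real.cos (B + 2 * π / 3)) ^ 2
      + Real.cos (C + 8 * π / 3) * (Real.cos (A + 4 * π / 3) + Real.cos (B + 4 * π / 3)) ^ 2
    = 3 / 2 * Real.cos (A + B - C) + 3 / 4 * Real.cos (2 * A - C)
      + 3 / 4 * Real.cos (2 * B - C) := by
  have h3 : Real.sqrt 3 ^ 2 = 3 := Real.sq_sqrt (by norm_num)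
  have c1 : Real.cos (2 * π / 3) = -(1 / 2) := by
    rw [show (2 : ℝ) * π / 3 = π - π / 3 by ring, Real.cos_pi_sub, Real.cos_pi_div_three]
  have s1 : Real.sin (2 * π / 3) = Real.sqrt 3 / 2 := by
    rw [show (2 : ℝ) * π / 3 = π - π / 3 by ring, Real.sin_pi_sub, Real.sin_pi_div_three]
  have c2 : Real.cos (4 * π / 3) = -(1 / 2) := by
    rw [show (4 : ℝ) * π / 3 = π / 3 + π by ring, Real.cos_add_pi, Real.cos_pi_div_three]
  have s2 : Real.sin (4 * π / 3) = -(Real.sqrt 3 / 2) := by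
    rw [show (4 : ℝ) * π / 3 = π / 3 + π by ring, Real.sin_add_pi, Real.sin_pi_div_three]
  have c3 : Real.cos (8 * π / 3) = -(1 / 2) := by
    rw [show (8 : ℝ) * π / 3 = 2 * π / 3 + 2 * π by ring, Real.cos_add_two_pi, c1]
  have s3 : Real.sin (8 * π / 3) = Real.sqrt 3 / 2 := by
    rw [show (8 : ℝ) * π / 3 = 2 * π / 3 + 2 * π by ring, Real.sin_add_two_pi, s1]
  rw [Real.cos_sub (A + B) C, Real.cos_sub (2 * A) C, Real.cos_sub (2 * B) C,
    Real.cos_add A B, Real.sin_add A B, Real.cos_two_mul' A, Real.sin_two_mul A,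
    Real.cos_two_mul' B, Real.sin_two_mul B,
    Real.cos_add C (4 * π / 3), Real.cos_add C (8 * π / 3),
    Real.cos_add A (2 * π / 3), Real.cos_add B (2 * π / 3),
    Real.cos_add A (4 * π / 3), Real.cos_add B (4 * π / 3),
    c1, s1, c2, s2, c3, s3]
  linear_combination ((-1/4) * Real.sin B ^ 2 * Real.cos C + (1/2) * Real.cos B * Real.sin B * Real.sin C
    + (-1/2) * Real.sin A * Real.sin B * Real.cos C + (1/2) * Real.sin A * Real.cos B * Real.sin C
    + (-1/4) * Real.sin A ^ 2 * Real.cos C + (1/2) * Real.cos A * Real.sin B * Real.sin C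
    + (1/2) * Real.cos A * Real.sin A * Real.sin C) * h3

lemma innerSum3 (θa θb θc : ℝ) :
    ∑ i : Fin 3, Real.cos (θc + 2 * ((i : ℕ) * (2 * π / 3)))
        * (Real.cos (θa + (i : ℕ) * (2 * π / 3)) + Real.cos (θb + (i : ℕ) * (2 * π / 3))) ^ 2
    = 3 / 2 * Real.cos (θa + θb - θc) + 3 / 4 * Real.cos (2 * θa - θc)
      + 3 / 4 * Real.cos (2 * θb - θc) := by
  rw [Fin.sum_univ_three]
  have e0 : ((0 : Fin 3) : ℕ) = 0 := rfl
  have e1 : ((1 : Fin 3) : ℕ) = 1 := rfl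
  have e2 : ((2 : Fin 3) : ℕ) = 2 := rfl
  rw [e0, e1, e2]
  push_cast
  rw [show θc + 2 * ((0 : ℝ) * (2 * π / 3)) = θc by ring,
    show θa + (0 : ℝ) * (2 * π / 3) = θa by ring,
    show θb + (0 : ℝ) * (2 * π / 3) = θb by ring,
    show θc + 2 * ((1 : ℝ) * (2 * π / 3)) = θc + 4 * π / 3 by ring,
    show θa + (1 : ℝ) * (2 * π / 3) = θa + 2 * π / 3 by ring,
    show θb + (1 : ℝ) * (2 * π / 3) = θb + 2 * π / 3 by ring,
    show θc + 2 * ((2 : ℝ) * (2 * π / 3)) = θc + 8 * π / 3 by ring,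
    show θa + (2 : ℝ) * (2 * π / 3) = θa + 4 * π / 3 by ring,
    show θb + (2 : ℝ) * (2 * π / 3) = θb + 4 * π / 3 by ring]
  exact key_trig θa θb θc

lemma dirichlet_full (P : ℕ) (hP : 0 < P) (n : ℤ) :
    ∑ j ∈ Finset.range P, Real.cos (2 * π / P * j * n)
      = if (P : ℤ) ∣ n then (P : ℝ) else 0 := by
  have hPC : (P : ℂ) ≠ 0 := Nat.cast_ne_zero.mpr hP.ne'
  set z : ℂ := Complex.exp (((2 * π * n / P : ℝ) : ℂ) * Complex.I) with hz
  have hre : ∀ j : ℕ, Real.cos (2 * π / P * j * n) = (z ^ j).re := by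
    intro j
    rw [hz, ← Complex.exp_nat_mul]
    have : (j : ℂ) * (((2 * π * n / P : ℝ) : ℂ) * Complex.I)
        = ((2 * π / P * j * n : ℝ) : ℂ) * Complex.I := by
      push_cast; ring
    rw [this, Complex.exp_ofReal_mul_I_re]
  have hsum : ∑ j ∈ Finset.range P, Real.cos (2 * π / P * j * n)
      = (∑ j ∈ Finset.range P, z ^ j).re := by
    rw [Complex.re_sum]
    exact Finset.sum_congr rfl fun j _ => hre j
  by_cases hdvd : (P : ℤ) ∣ n
  · obtain ⟨m, hm⟩ := hdvd
    have hz1 : z = 1 := by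
      rw [hz]
      have : (((2 * π * n / P : ℝ) : ℂ) * Complex.I) = (m : ℤ) * (2 * π * Complex.I) := by
        push_cast [hm]
        field_simp
      rw [this]
      exact Complex.exp_int_mul_two_pi_mul_I m
    rw [hsum, if_pos ⟨m, hm⟩, hz1]
    simp
  · have hzP : z ^ P = 1 := by
      rw [hz, ← Complex.exp_nat_mul]
      have : (P : ℂ) * (((2 * π * n / P : ℝ) : ℂ) * Complex.I) = (n : ℤ) * (2 * π * Complex.I) := by
        push_cast
        field_simp
      rw [this]
      exact Complex.exp_int_mul_two_pi_mul_I n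
    have hz1 : z ≠ 1 := by
      intro h
      rw [hz, Complex.exp_eq_one_iff] at h
      obtain ⟨m, hm⟩ := h
      have hI : ((2 * π * n / P : ℝ) : ℂ) = ((2 * π * m : ℝ) : ℂ) := by
        have h2 : ((2 * π * n / P : ℝ) : ℂ) * Complex.I = ((2 * π * m : ℝ) : ℂ) * Complex.I :=
          hm.trans (by push_cast; ring)
        exact mul_right_cancel₀ Complex.I_ne_zero h2
      have hr : (2 * π * n / P : ℝ) = 2 * π * m := Complex.ofReal_injective hI
      have hpi : (π : ℝ) ≠ 0 := Real.pi_ne_zero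
      have hPR : (P : ℝ) ≠ 0 := Nat.cast_ne_zero.mpr hP.ne'
      have h4 : (2 * π : ℝ) * n = (2 * π) * ((m : ℝ) * P) := by
        field_simp at hr
        linear_combination (2 * π) * hr
      have h5 : (n : ℝ) = (m : ℝ) * P :=
        mul_left_cancel₀ (by positivity) h4
      have h6 : n = m * P := by exact_mod_cast h5
      exact hdvd ⟨m, by rw [h6]; ring⟩
    have hzero : ∑ j ∈ Finset.range P, z ^ j = 0 := by
      rw [geom_sum_eq hz1, hzP]
      simp
    rw [hsum, if_neg hdvd, hzero]
    simp

lemma dirichlet_half (P Q : ℕ) (hPQ : P = 2 * Q + 1) (n : ℤ) :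
    ∑ j ∈ Finset.range Q, Real.cos (2 * π / P * (j + 1) * n)
      = ((if (P : ℤ) ∣ n then (P : ℝ) else 0) - 1) / 2 := by
  have hP : 0 < P := by omega
  have hPR : (P : ℝ) ≠ 0 := Nat.cast_ne_zero.mpr hP.ne'
  set c : ℕ → ℝ := fun j => Real.cos (2 * π / P * j * n) with hc
  have hrefl : ∀ x y : ℕ, x + y = P → c x = c y := by
    intro x y hxy
    have hx : (x : ℝ) = (P : ℝ) - y := by
      have : (x : ℝ) + y = P := by exact_mod_cast hxy
      linarith
    rw [hc]
    simp only
    rw [show 2 * π / P * x * n = (n : ℤ) * (2 * π) - 2 * π / P * y * n by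
      rw [hx]; push_cast; field_simp]
    exact Real.cos_int_mul_two_pi_sub _ n
  have hfull : ∑ j ∈ Finset.range P, c j = if (P : ℤ) ∣ n then (P : ℝ) else 0 :=
    dirichlet_full P hP n
  have hc0 : c 0 = 1 := by simp [hc]
  have hsplit : ∑ j ∈ Finset.range P, c j = c 0 + ∑ j ∈ Finset.range (2 * Q), c (j + 1) := by
    rw [hPQ, Finset.sum_range_succ']
    ring
  have hsplit2 : ∑ j ∈ Finset.range (2 * Q), c (j + 1)
      = ∑ j ∈ Finset.range Q, c (j + 1) + ∑ j ∈ Finset.range Q, c (Q + j + 1) := by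
    rw [two_mul, Finset.sum_range_add]
  have hsecond : ∑ j ∈ Finset.range Q, c (Q + j + 1) = ∑ j ∈ Finset.range Q, c (j + 1) := by
    have h1 : ∀ j ∈ Finset.range Q, c (Q + j + 1) = c (Q - j) := by
      intro j hj
      simp only [Finset.mem_range] at hj
      exact hrefl _ _ (by omega)
    rw [Finset.sum_congr rfl h1]
    calc ∑ j ∈ Finset.range Q, c (Q - j)
        = ∑ j ∈ Finset.range Q, c (Q - 1 - j + 1) := by
          apply Finset.sum_congr rfl
          intro j hj
          simp only [Finset.mem_range] at hj
          congr 1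
          omega
      _ = ∑ j ∈ Finset.range Q, c (j + 1) := Finset.sum_range_reflect (fun j => c (j + 1)) Q
  have key : (if (P : ℤ) ∣ n then (P : ℝ) else 0) = 1 + 2 * ∑ j ∈ Finset.range Q, c (j + 1) := by
    rw [← hfull, hsplit, hsplit2, hsecond, hc0]; ring
  have hgoal : ∑ j ∈ Finset.range Q, Real.cos (2 * π / P * (j + 1) * n)
      = ∑ j ∈ Finset.range Q, c (j + 1) := by
    apply Finset.sum_congr rfl
    intro j _
    rw [hc]
    push_cast
    ring_nf
  rw [hgoal]
  linarith [key]

/-- For odd `P ≥ 3` there exist a width `M` and cosine-form neuron parameters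
(with frequencies in `{1,…,(P-1)/2}` and phases satisfying
`φ^{(a)} + φ^{(b)} = φ^{(c)}`) such that the two-layer quadratic network
`f(a,b)_k = ∑_m w_{m,k} (u_{m,a} + v_{m,b})²` classifies every modular-addition
input correctly: `(a+b) mod P` is the unique maximizer of `k ↦ f(a,b)_k`. -/
theorem cosine_solution_perfect_accuracy (P : ℕ) [NeZero P] (hP : 3 ≤ P) (hodd : Odd P) :
    ∃ (M : ℕ) (lam : Fin M → ℝ) (ω : Fin M → ℕ) (φa φb φc : Fin M → ℝ),
      (∀ m : Fin M, 1 ≤ ω m ∧ ω m ≤ (P - 1) / 2) ∧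
      (∀ m : Fin M, φa m + φb m = φc m) ∧
      (∀ a b : Fin P, ∀ f : Fin P → ℝ,
        (∀ k : Fin P,
          f k = ∑ m : Fin M,
            (lam m * Real.cos (2 * Real.pi / P * (ω m) * (k : ℕ) + φc m)) *
              (lam m * Real.cos (2 * Real.pi / P * (ω m) * (a : ℕ) + φa m) +
               lam m * Real.cos (2 * Real.pi / P * (ω m) * (b : ℕ) + φb m)) ^ 2) →
        ∀ k : Fin P, k ≠ a + b → f k < f (a + b)) := by
  obtain ⟨Q, hPQ⟩ : ∃ Q, P = 2 * Q + 1 := by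
    obtain ⟨t, ht⟩ := hodd
    exact ⟨t, by omega⟩
  have hQ1 : 1 ≤ Q := by omega
  have hQhalf : (P - 1) / 2 = Q := by omega
  set e : Fin Q × Fin 3 ≃ Fin (Q * 3) := finProdFinEquiv with he
  refine ⟨Q * 3, fun _ => 1, fun m => ((e.symm m).1 : ℕ) + 1,
    fun m => ((e.symm m).2 : ℕ) * (2 * π / 3), fun m => ((e.symm m).2 : ℕ) * (2 * π / 3),
    fun m => 2 * (((e.symm m).2 : ℕ) * (2 * π / 3)), ?_, ?_, ?_⟩
  · intro m
    have hlt := (e.symm m).1.isLt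
    constructor
    · show 1 ≤ ((e.symm m).1 : ℕ) + 1
      omega
    · show ((e.symm m).1 : ℕ) + 1 ≤ (P - 1) / 2
      omega
  · intro m; ring
  · intro a b f hf
    -- abbreviations
    set S : ℤ → ℝ := fun n => ((if (P : ℤ) ∣ n then (P : ℝ) else 0) - 1) / 2 with hS
    have hSsum : ∀ n : ℤ, ∑ j : Fin Q, Real.cos (2 * π / P * ((j : ℕ) + 1) * n) = S n := by
      intro n
      rw [Fin.sum_univ_eq_sum_range (fun j => Real.cos (2 * π / P * ((j : ℕ) + 1) * n)) Q]
      exact dirichlet_half P Q hPQ n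
    -- evaluate f
    have hfk : ∀ k : Fin P,
        f k = 3 / 2 * S ((a : ℤ) + (b : ℤ) - (k : ℤ))
            + 3 / 4 * S (2 * (a : ℤ) - (k : ℤ)) + 3 / 4 * S (2 * (b : ℤ) - (k : ℤ)) := by
      intro k
      rw [hf k]
      rw [← Equiv.sum_comp e (fun m =>
        ((1 : ℝ) * Real.cos (2 * Real.pi / P * ((((e.symm m).1 : ℕ) + 1 : ℕ)) * (k : ℕ)
            + 2 * (((e.symm m).2 : ℕ) * (2 * π / 3)))) *
          ((1 : ℝ) * Real.cos (2 * Real.pi / P * ((((e.symm m).1 : ℕ) + 1 : ℕ)) * (a : ℕ)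
            + ((e.symm m).2 : ℕ) * (2 * π / 3)) +
           (1 : ℝ) * Real.cos (2 * Real.pi / P * ((((e.symm m).1 : ℕ) + 1 : ℕ)) * (b : ℕ)
            + ((e.symm m).2 : ℕ) * (2 * π / 3))) ^ 2)]
      simp only [Equiv.symm_apply_apply, one_mul]
      rw [Fintype.sum_prod_type]
      have hinner : ∀ j : Fin Q,
          (∑ i : Fin 3,
            Real.cos (2 * Real.pi / P * (((j : ℕ) + 1 : ℕ)) * (k : ℕ) + 2 * ((i : ℕ) * (2 * π / 3))) *
              (Real.cos (2 * Real.pi / P * (((j : ℕ) + 1 : ℕ)) * (a : ℕ) + (i : ℕ) * (2 * π / 3)) +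
               Real.cos (2 * Real.pi / P * (((j : ℕ) + 1 : ℕ)) * (b : ℕ) + (i : ℕ) * (2 * π / 3))) ^ 2)
          = 3 / 2 * Real.cos (2 * π / P * ((j : ℕ) + 1) * (((a : ℤ) + (b : ℤ) - (k : ℤ) : ℤ) : ℝ))
          + 3 / 4 * Real.cos (2 * π / P * ((j : ℕ) + 1) * (((2 * (a : ℤ) - (k : ℤ) : ℤ)) : ℝ))
          + 3 / 4 * Real.cos (2 * π / P * ((j : ℕ) + 1) * (((2 * (b : ℤ) - (k : ℤ) : ℤ)) : ℝ)) := by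
        intro j
        rw [innerSum3]
        congr 1
        · congr 1
          · congr 1
            push_cast
            ring
          · congr 1
            push_cast
            ring
        · congr 1
          push_cast
          ring
      rw [Finset.sum_congr rfl (fun j _ => hinner j)]
      rw [Finset.sum_add_distrib, Finset.sum_add_distrib, ← Finset.mul_sum, ← Finset.mul_sum,
        ← Finset.mul_sum, hSsum, hSsum, hSsum]
    -- arithmetic facts about divisibility
    have hval : ((a + b : Fin P) : ℤ) = ((a : ℤ) + (b : ℤ)) % P := by
      have : ((a + b : Fin P) : ℕ) = ((a : ℕ) + (b : ℕ)) % P := Fin.val_add a b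
      rw [this]
      push_cast
      ring
    have hd1 : (P : ℤ) ∣ ((a : ℤ) + (b : ℤ) - ((a + b : Fin P) : ℤ)) := by
      rw [hval]
      exact Int.dvd_self_sub_of_emod_eq rfl
    -- S bounds
    have hP3 : (3 : ℝ) ≤ (P : ℝ) := by exact_mod_cast hP
    have hSle : ∀ n : ℤ, S n ≤ ((P : ℝ) - 1) / 2 := by
      intro n
      simp only [hS]
      split_ifs <;> simp <;> linarith
    have hSge : ∀ n : ℤ, -(1 / 2 : ℝ) ≤ S n := by
      intro n
      simp only [hS]
      split_ifs <;> simp <;> linarith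
    have hSbig : ∀ n : ℤ, (P : ℤ) ∣ n → S n = ((P : ℝ) - 1) / 2 := by
      intro n hn
      simp only [hS]; simp [hn]
    have hSsmall : ∀ n : ℤ, ¬ (P : ℤ) ∣ n → S n = -(1 / 2 : ℝ) := by
      intro n hn
      simp only [hS]; simp [hn]; ring
    intro k hk
    -- k ≠ a + b implies no divisibility for the main term
    have hkv : ¬ (P : ℤ) ∣ ((a : ℤ) + (b : ℤ) - (k : ℤ)) := by
      intro hdvd
      apply hk
      have h1 : (P : ℤ) ∣ (((a + b : Fin P) : ℤ) - (k : ℤ)) := by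
        have h := dvd_sub hdvd hd1
        have he2 : ((a : ℤ) + (b : ℤ) - (k : ℤ)) - ((a : ℤ) + (b : ℤ) - ((a + b : Fin P) : ℤ))
            = ((a + b : Fin P) : ℤ) - (k : ℤ) := by ring
        rwa [he2] at h
      have h2 : ((a + b : Fin P) : ℤ) - (k : ℤ) = 0 := by
        refine Int.eq_zero_of_abs_lt_dvd h1 ?_
        have ha : ((a + b : Fin P) : ℤ) < P := by exact_mod_cast (a + b).isLt
        have hb : (0 : ℤ) ≤ ((a + b : Fin P) : ℤ) := by positivity
        have hc : ((k : Fin P) : ℤ) < P := by exact_mod_cast k.isLt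
        have hd : (0 : ℤ) ≤ ((k : Fin P) : ℤ) := by positivity
        rw [abs_lt]
        omega
      have : ((a + b : Fin P) : ℤ) = (k : ℤ) := by omega
      have : ((a + b : Fin P) : ℕ) = (k : ℕ) := by exact_mod_cast this
      exact (Fin.ext this).symm
    -- not both 2a-k and 2b-k divisible
    have hnotboth : ¬ ((P : ℤ) ∣ (2 * (a : ℤ) - (k : ℤ)) ∧ (P : ℤ) ∣ (2 * (b : ℤ) - (k : ℤ))) := by
      rintro ⟨h2a, h2b⟩
      have hdiff : (P : ℤ) ∣ ((a : ℤ) - (b : ℤ)) * 2 := by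
        have := dvd_sub h2a h2b
        have h : (2 * (a : ℤ) - (k : ℤ)) - (2 * (b : ℤ) - (k : ℤ)) = ((a : ℤ) - (b : ℤ)) * 2 := by
          ring
        rwa [h] at this
      have hab : (P : ℤ) ∣ ((a : ℤ) - (b : ℤ)) := by
        obtain ⟨c, hc⟩ := hdiff
        have h1 : Even ((P : ℤ) * c) := ⟨(a : ℤ) - (b : ℤ), by linarith [hc]⟩
        have hec : Even c := by
          rcases Int.even_mul.mp h1 with h | h
          · exfalso
            have : Even P := by exact_mod_cast h
            exact (Nat.not_even_iff_odd.mpr hodd) this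
          · exact h
        obtain ⟨c', hc'⟩ := hec
        refine ⟨c', ?_⟩
        have h2 : ((a : ℤ) - (b : ℤ)) * 2 = ((P : ℤ) * c') * 2 := by
          rw [hc, hc']; ring
        exact mul_right_cancel₀ two_ne_zero h2
      have habeq : (a : ℤ) = (b : ℤ) := by
        have h2 : (a : ℤ) - (b : ℤ) = 0 := by
          refine Int.eq_zero_of_abs_lt_dvd hab ?_
          have ha : ((a : Fin P) : ℤ) < P := by exact_mod_cast a.isLt
          have hb : ((b : Fin P) : ℤ) < P := by exact_mod_cast b.isLt
          have hc : (0 : ℤ) ≤ ((a : Fin P) : ℤ) := by positivity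
          have hd : (0 : ℤ) ≤ ((b : Fin P) : ℤ) := by positivity
          rw [abs_lt]
          omega
        omega
      apply hkv
      have : (a : ℤ) + (b : ℤ) - (k : ℤ) = 2 * (a : ℤ) - (k : ℤ) := by omega
      rwa [this]
    -- final comparison
    rw [hfk k, hfk (a + b)]
    have hbig1 : S ((a : ℤ) + (b : ℤ) - ((a + b : Fin P) : ℤ)) = ((P : ℝ) - 1) / 2 := hSbig _ hd1
    have hsmall1 : S ((a : ℤ) + (b : ℤ) - (k : ℤ)) = -(1 / 2 : ℝ) := hSsmall _ hkv
    have hsum23 : S (2 * (a : ℤ) - (k : ℤ)) + S (2 * (b : ℤ) - (k : ℤ))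
        ≤ ((P : ℝ) - 1) / 2 - 1 / 2 := by
      by_cases h2a : (P : ℤ) ∣ (2 * (a : ℤ) - (k : ℤ))
      · have h2b : ¬ (P : ℤ) ∣ (2 * (b : ℤ) - (k : ℤ)) := fun h => hnotboth ⟨h2a, h⟩
        rw [hSbig _ h2a, hSsmall _ h2b]
        linarith
      · rw [hSsmall _ h2a]
        have := hSle (2 * (b : ℤ) - (k : ℤ))
        linarith
    rw [hbig1, hsmall1]
    have hge2 := hSge (2 * (a : ℤ) - ((a + b : Fin P) : ℤ))
    have hge3 := hSge (2 * (b : ℤ) - ((a + b : Fin P) : ℤ))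
    linarith [hsum23]
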